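/- Let L > 0, let κ₀ : [0,L] → ℝ be continuous, and let δ > 0 satisfy δ·sup_{σ}|κ₀(σ)| < 1. If u, v : [0,L] → ℝ are continuously differentiable functions taking values in [−δ, δ] with ∫₀^L (u − κ₀u²/2) dσ = ∫₀^L (v − κ₀v²/2) dσ, then the difference w := u − v satisfies the Poincaré inequality ‖w‖_{L²(0,L)} ≤ L·‖w'‖_{L²(0,L)}. -/

import Mathlib

open Set MeasureTheory


theorem cs_aux (L : ℝ) (hL : 0 < L) (f : ℝ → ℝ) (hf : ContinuousOn f (Icc 0 L)) :
    (∫ σ in (0:ℝ)..L, |f σ|) ≤ Real.sqrt L * Real.sqrt (∫ σ in (0:ℝ)..L, (f σ)^2) := by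
  have hIcc : uIcc (0:ℝ) L = Icc 0 L := uIcc_of_le hL.le
  set μ : Measure ℝ := volume.restrict (Ioc 0 L) with hμ
  haveI : IsFiniteMeasure μ := by
    constructor
    rw [hμ, Measure.restrict_apply_univ, Real.volume_Ioc]
    exact ENNReal.ofReal_lt_top
  obtain ⟨M, hM⟩ := isCompact_Icc.exists_bound_of_continuousOn hf
  have hmeas : AEStronglyMeasurable f μ :=
    (hf.mono Ioc_subset_Icc_self).aestronglyMeasurable measurableSet_Ioc
  have hbd : ∀ᵐ x ∂μ, ‖f x‖ ≤ M := by
    rw [hμ, ae_restrict_iff' measurableSet_Ioc]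
    exact ae_of_all _ fun x hx => hM x (Ioc_subset_Icc_self hx)
  have hmemf : MemLp (fun x => |f x|) (ENNReal.ofReal 2) μ := by
    refine MemLp.of_bound hmeas.norm M ?_
    filter_upwards [hbd] with x hx
    simpa using hx
  have hmemg : MemLp (fun _ : ℝ => (1:ℝ)) (ENNReal.ofReal 2) μ := memLp_const 1
  have hpq : (2:ℝ).HolderConjugate 2 := Real.holderConjugate_iff.mpr ⟨by norm_num, by norm_num⟩
  have hH := integral_mul_le_Lp_mul_Lq_of_nonneg hpq
    (ae_of_all μ fun x => abs_nonneg (f x)) (ae_of_all μ fun _ => zero_le_one) hmemf hmemg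
  simp only [mul_one] at hH
  have h1 : ∫ a, |f a| ∂μ = ∫ σ in (0:ℝ)..L, |f σ| := by
    rw [intervalIntegral.integral_of_le hL.le]
  have h2 : ∫ a, |f a| ^ (2:ℝ) ∂μ = ∫ σ in (0:ℝ)..L, (f σ)^2 := by
    rw [intervalIntegral.integral_of_le hL.le]
    refine setIntegral_congr_fun measurableSet_Ioc fun x _ => ?_
    rw [show ((2:ℝ)) = ((2:ℕ):ℝ) by norm_num, Real.rpow_natCast, sq_abs]
  have h3 : ∫ _a, (1:ℝ) ^ (2:ℝ) ∂μ = L := by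
    simp [hμ, Real.volume_Ioc, ENNReal.toReal_ofReal hL.le, hL.le]
  rw [h1, h2, h3] at hH
  have hA : 0 ≤ ∫ σ in (0:ℝ)..L, (f σ)^2 :=
    intervalIntegral.integral_nonneg hL.le fun x _ => sq_nonneg _
  calc (∫ σ in (0:ℝ)..L, |f σ|)
      ≤ (∫ σ in (0:ℝ)..L, (f σ)^2) ^ (1/(2:ℝ)) * L ^ (1/(2:ℝ)) := hH
    _ = Real.sqrt L * Real.sqrt (∫ σ in (0:ℝ)..L, (f σ)^2) := by
        rw [Real.sqrt_eq_rpow, Real.sqrt_eq_rpow]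
        exact mul_comm _ _

theorem poincare_aux (L : ℝ) (hL : 0 < L) (w w' : ℝ → ℝ)
    (hw : ∀ σ ∈ Icc (0:ℝ) L, HasDerivWithinAt w (w' σ) (Icc 0 L) σ)
    (hw' : ContinuousOn w' (Icc 0 L))
    (σ₀ : ℝ) (hσ₀ : σ₀ ∈ Icc (0:ℝ) L) (hwσ₀ : w σ₀ = 0) :
    Real.sqrt (∫ σ in (0:ℝ)..L, (w σ)^2) ≤ L * Real.sqrt (∫ σ in (0:ℝ)..L, (w' σ)^2) := by
  have hIcc : uIcc (0:ℝ) L = Icc 0 L := uIcc_of_le hL.le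
  have hwcont : ContinuousOn w (Icc 0 L) := fun σ hσ => (hw σ hσ).continuousWithinAt
  have hw'int : IntervalIntegrable w' volume 0 L :=
    (hw'.mono (by rw [hIcc])).intervalIntegrable
  set A : ℝ := ∫ σ in (0:ℝ)..L, (w' σ)^2 with hA
  have hA0 : 0 ≤ A := intervalIntegral.integral_nonneg hL.le fun x _ => sq_nonneg _
  set I : ℝ := ∫ σ in (0:ℝ)..L, |w' σ| with hI
  have hCS : I ≤ Real.sqrt L * Real.sqrt A := cs_aux L hL w' hw'
  -- derivative within Ioi for interior points
  have hderivIoi : ∀ x ∈ Ioo (0:ℝ) L, HasDerivWithinAt w (w' x) (Ioi x) x := by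
    intro x hx
    have hx' : x ∈ Icc (0:ℝ) L := Ioo_subset_Icc_self hx
    refine (hw x hx').mono_of_mem_nhdsWithin ?_
    refine Filter.mem_of_superset (Ioc_mem_nhdsGT_of_mem ⟨le_refl x, hx.2⟩) ?_
    exact fun y hy => ⟨hx.1.le.trans hy.1.le, hy.2⟩
  -- FTC on subintervals with both endpoints in [0, L]
  have hftc : ∀ a b : ℝ, a ∈ Icc (0:ℝ) L → b ∈ Icc (0:ℝ) L → a ≤ b →
      ∫ t in a..b, w' t = w b - w a := by
    intro a b ha hb hab
    refine intervalIntegral.integral_eq_sub_of_hasDeriv_right_of_le hab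
      (hwcont.mono (Icc_subset_Icc ha.1 hb.2)) (fun x hx => ?_)
      (hw'int.mono_set (by rw [hIcc]; exact uIcc_subset_Icc ha hb))
    exact hderivIoi x ⟨lt_of_le_of_lt ha.1 hx.1, lt_of_lt_of_le hx.2 hb.2⟩
  -- pointwise bound |w σ| ≤ I
  have hpt : ∀ σ ∈ Icc (0:ℝ) L, |w σ| ≤ I := by
    intro σ hσ
    have habs : ∀ a b : ℝ, a ∈ Icc (0:ℝ) L → b ∈ Icc (0:ℝ) L → a ≤ b →
        |∫ t in a..b, w' t| ≤ I := by
      intro a b ha hb hab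
      calc |∫ t in a..b, w' t| ≤ ∫ t in a..b, |w' t| :=
            intervalIntegral.abs_integral_le_integral_abs hab
        _ ≤ I := by
            refine intervalIntegral.integral_mono_interval ha.1 hab hb.2
              (ae_of_all _ fun x => abs_nonneg _) hw'int.abs
    rcases le_total σ₀ σ with hle | hle
    · have := hftc σ₀ σ hσ₀ hσ hle
      rw [hwσ₀, sub_zero] at this
      rw [← this]; exact habs σ₀ σ hσ₀ hσ hle
    · have := hftc σ σ₀ hσ hσ₀ hle
      rw [hwσ₀, zero_sub] at this
      have : |w σ| = |∫ t in σ..σ₀, w' t| := by rw [this, abs_neg]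
      rw [this]; exact habs σ σ₀ hσ hσ₀ hle
  -- square the pointwise bound and integrate
  have hI0 : 0 ≤ I := intervalIntegral.integral_nonneg hL.le fun x _ => abs_nonneg _
  have hsq : ∀ σ ∈ Icc (0:ℝ) L, (w σ)^2 ≤ L * A := by
    intro σ hσ
    have h1 : (w σ)^2 ≤ I^2 := by
      rw [← sq_abs]
      exact pow_le_pow_left₀ (abs_nonneg _) (hpt σ hσ) 2
    have h2 : I^2 ≤ (Real.sqrt L * Real.sqrt A)^2 := pow_le_pow_left₀ hI0 hCS 2
    have h3 : (Real.sqrt L * Real.sqrt A)^2 = L * A := by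
      rw [mul_pow, Real.sq_sqrt hL.le, Real.sq_sqrt hA0]
    linarith
  have hw2int : IntervalIntegrable (fun σ => (w σ)^2) volume 0 L :=
    ((hwcont.pow 2).mono (by rw [hIcc])).intervalIntegrable
  have hint2 : (∫ σ in (0:ℝ)..L, (w σ)^2) ≤ ∫ _σ in (0:ℝ)..L, L * A := by
    refine intervalIntegral.integral_mono_on hL.le hw2int (intervalIntegrable_const) hsq
  have hconst : (∫ _σ in (0:ℝ)..L, L * A) = L^2 * A := by
    rw [intervalIntegral.integral_const]; ring_nf
  calc Real.sqrt (∫ σ in (0:ℝ)..L, (w σ)^2) ≤ Real.sqrt (L^2 * A) := by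
        apply Real.sqrt_le_sqrt; rw [← hconst]; exact hint2
    _ = L * Real.sqrt A := by
        rw [Real.sqrt_mul (sq_nonneg L), Real.sqrt_sq hL.le]

/-- for two C¹ normal graphs `u`, `v` over a reference curve of length `L`
and curvature `κ0`, taking values in `[-δ, δ]` with `δ·sup|κ0| < 1` and enclosing the same
weighted area, the difference `w = u - v` satisfies the Poincaré inequality
`‖w‖_{L²(0,L)} ≤ L·‖w'‖_{L²(0,L)}`. -/
theorem stmt_2 (L : ℝ) (hL : 0 < L) (κ0 u v u' v' : ℝ → ℝ) (δ C : ℝ) (hδ : 0 < δ)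
    (hκcont : ContinuousOn κ0 (Icc 0 L))
    (hC : ∀ σ ∈ Icc (0:ℝ) L, |κ0 σ| ≤ C) (hδC : δ * C < 1)
    (hu : ∀ σ ∈ Icc (0:ℝ) L, HasDerivWithinAt u (u' σ) (Icc 0 L) σ)
    (hv : ∀ σ ∈ Icc (0:ℝ) L, HasDerivWithinAt v (v' σ) (Icc 0 L) σ)
    (hu' : ContinuousOn u' (Icc 0 L)) (hv' : ContinuousOn v' (Icc 0 L))
    (hurange : ∀ σ ∈ Icc (0:ℝ) L, u σ ∈ Icc (-δ) δ)
    (hvrange : ∀ σ ∈ Icc (0:ℝ) L, v σ ∈ Icc (-δ) δ)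
    (harea : (∫ σ in (0:ℝ)..L, (u σ - κ0 σ * (u σ)^2 / 2)) =
             (∫ σ in (0:ℝ)..L, (v σ - κ0 σ * (v σ)^2 / 2))) :
    Real.sqrt (∫ σ in (0:ℝ)..L, (u σ - v σ)^2) ≤
      L * Real.sqrt (∫ σ in (0:ℝ)..L, (u' σ - v' σ)^2) := by
  have hIcc : uIcc (0:ℝ) L = Icc 0 L := uIcc_of_le hL.le
  have hucont : ContinuousOn u (Icc 0 L) := fun σ hσ => (hu σ hσ).continuousWithinAt
  have hvcont : ContinuousOn v (Icc 0 L) := fun σ hσ => (hv σ hσ).continuousWithinAt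
  set w : ℝ → ℝ := fun σ => u σ - v σ with hwdef
  set g : ℝ → ℝ := fun σ => 1 - κ0 σ * (u σ + v σ) / 2 with hgdef
  have hwcont : ContinuousOn w (Icc 0 L) := hucont.sub hvcont
  have hgcont : ContinuousOn g (Icc 0 L) :=
    (continuousOn_const.sub (((hκcont.mul (hucont.add hvcont))).div_const 2))
  have hgpos : ∀ σ ∈ Icc (0:ℝ) L, 0 < g σ := by
    intro σ hσ
    obtain ⟨hu1, hu2⟩ := hurange σ hσ
    obtain ⟨hv1, hv2⟩ := hvrange σ hσ
    have hC0 : 0 ≤ C := (abs_nonneg _).trans (hC 0 ⟨le_refl 0, hL.le⟩)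
    have habs : |u σ + v σ| ≤ 2 * δ := abs_le.2 ⟨by linarith, by linarith⟩
    have h1 : |κ0 σ * (u σ + v σ)| ≤ C * (2 * δ) := by
      rw [abs_mul]
      exact mul_le_mul (hC σ hσ) habs (abs_nonneg _) hC0
    have h2 : κ0 σ * (u σ + v σ) ≤ C * (2 * δ) := (le_abs_self _).trans h1
    have h3 : -(C * (2 * δ)) ≤ κ0 σ * (u σ + v σ) := by
      have := (neg_abs_le (κ0 σ * (u σ + v σ)))
      linarith
    simp only [hgdef]
    nlinarith
  -- the weighted-area difference integral vanishes
  have huint : IntervalIntegrable (fun σ => u σ - κ0 σ * (u σ)^2 / 2) volume 0 L :=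
    ((hucont.sub ((hκcont.mul (hucont.pow 2)).div_const 2)).mono (by rw [hIcc])).intervalIntegrable
  have hvint : IntervalIntegrable (fun σ => v σ - κ0 σ * (v σ)^2 / 2) volume 0 L :=
    ((hvcont.sub ((hκcont.mul (hvcont.pow 2)).div_const 2)).mono (by rw [hIcc])).intervalIntegrable
  have hwgint : IntervalIntegrable (fun σ => w σ * g σ) volume 0 L :=
    ((hwcont.mul hgcont).mono (by rw [hIcc])).intervalIntegrable
  have hint0 : (∫ σ in (0:ℝ)..L, w σ * g σ) = 0 := by
    have heq : ∀ σ, w σ * g σ =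
        (u σ - κ0 σ * (u σ)^2 / 2) - (v σ - κ0 σ * (v σ)^2 / 2) := by
      intro σ; simp only [hwdef, hgdef]; ring
    rw [intervalIntegral.integral_congr (fun σ _ => heq σ),
      intervalIntegral.integral_sub huint hvint, harea, sub_self]
  -- existence of a zero of w in [0, L]
  have hzero : ∃ σ₀ ∈ Icc (0:ℝ) L, w σ₀ = 0 := by
    by_contra hcon
    push_neg at hcon
    have hsign : (∀ σ ∈ Icc (0:ℝ) L, 0 < w σ) ∨ (∀ σ ∈ Icc (0:ℝ) L, w σ < 0) := by
      by_contra h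
      push_neg at h
      obtain ⟨⟨a, ha, ha'⟩, ⟨b, hb, hb'⟩⟩ := h
      have hsub : uIcc a b ⊆ Icc (0:ℝ) L := uIcc_subset_Icc ha hb
      have h0 : (0:ℝ) ∈ uIcc (w a) (w b) := by
        rcases le_total (w a) (w b) with h | h
        · rw [uIcc_of_le h]; exact ⟨ha', hb'⟩
        · rw [uIcc_of_ge h]; exact ⟨h.trans ha', hb'.trans h⟩
      obtain ⟨σ₀, hσ₀, hwσ₀⟩ := intermediate_value_uIcc (hwcont.mono hsub) h0
      exact hcon σ₀ (hsub hσ₀) hwσ₀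
    rcases hsign with hpos | hneg
    · have : 0 < ∫ σ in (0:ℝ)..L, w σ * g σ := by
        refine intervalIntegral.intervalIntegral_pos_of_pos_on hwgint (fun x hx => ?_) hL
        have hx' : x ∈ Icc (0:ℝ) L := Ioo_subset_Icc_self hx
        exact mul_pos (hpos x hx') (hgpos x hx')
      rw [hint0] at this; exact lt_irrefl 0 this
    · have : 0 < ∫ σ in (0:ℝ)..L, -(w σ * g σ) := by
        refine intervalIntegral.intervalIntegral_pos_of_pos_on hwgint.neg (fun x hx => ?_) hL
        have hx' : x ∈ Icc (0:ℝ) L := Ioo_subset_Icc_self hx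
        have := mul_pos_of_neg_of_neg (hneg x hx') (neg_neg_of_pos (hgpos x hx'))
        nlinarith [hneg x hx', hgpos x hx']
      rw [intervalIntegral.integral_neg, hint0, neg_zero] at this
      exact lt_irrefl 0 this
  obtain ⟨σ₀, hσ₀, hwσ₀⟩ := hzero
  exact poincare_aux L hL w (fun σ => u' σ - v' σ)
    (fun σ hσ => (hu σ hσ).sub (hv σ hσ)) (hu'.sub hv') σ₀ hσ₀ hwσ₀
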